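/- Let n = 1, a₁ = -1, a₂ < 0, a₃ = 1 (case DDF). Suppose φ ∈ H¹(ℝ)\{0} satisfies K(φ) = 0 and P(φ) = 0 where K(φ) = ‖φ'‖² + ‖φ‖³_{L³} - a₂‖φ‖⁴_{L⁴} - ‖φ‖⁵_{L⁵} and P(φ) = ‖φ'‖² + (1/6)‖φ‖³_{L³} - (a₂/4)‖φ‖⁴_{L⁴} - (3/10)‖φ‖⁵_{L⁵}. Then ∂²_λ S(φ^λ)|_{λ=1} = ‖φ'‖² - (1/12)‖φ‖³_{L³} - (3/20)‖φ‖⁵_{L⁵} = -(5/18)‖φ'‖² - (1/54)‖φ‖³_{L³} + (5a₂/72)‖φ‖⁴_{L⁴} < 0. -/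

import Mathlib

open MeasureTheory

noncomputable def gradSq1 (v : ℝ → ℝ) : ℝ := ∫ x, (deriv v x)^2

noncomputable def lp1 (p : ℕ) (v : ℝ → ℝ) : ℝ := ∫ x, |v x| ^ p

noncomputable def Kf1 (a₂ : ℝ) (v : ℝ → ℝ) : ℝ :=
  gradSq1 v + lp1 3 v - a₂ * lp1 4 v - lp1 5 v

noncomputable def Sf1 (a₂ : ℝ) (v : ℝ → ℝ) : ℝ :=
  (1/2) * gradSq1 v + (1/3) * lp1 3 v - (a₂/4) * lp1 4 v - (1/5) * lp1 5 v

noncomputable def Pf1 (a₂ : ℝ) (v : ℝ → ℝ) : ℝ :=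
  gradSq1 v + (1/6) * lp1 3 v - (a₂/4) * lp1 4 v - (3/10) * lp1 5 v

/-- The rescaling `v^λ(x) = λ^{1/2} v (λ x)` in dimension one. -/
noncomputable def scal1 (l : ℝ) (v : ℝ → ℝ) : ℝ → ℝ :=
  fun x => l ^ ((1:ℝ)/2) * v (l * x)

/-- `φ ∈ H¹(ℝ)` together with the integrabilities making the functionals
well defined. -/
def Adm1 (v : ℝ → ℝ) : Prop :=
  Differentiable ℝ v ∧ MemLp v 2 volume ∧ MemLp (deriv v) 2 volume ∧
    MemLp v 3 volume ∧ MemLp v 4 volume ∧ MemLp v 5 volume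

lemma scal_gradSq (φ : ℝ → ℝ) (hd : Differentiable ℝ φ) {l : ℝ} (hl : 0 < l) :
    gradSq1 (scal1 l φ) = l ^ (2:ℝ) * gradSq1 φ := by
  have hder : ∀ x, deriv (scal1 l φ) x = (l ^ ((1:ℝ)/2) * l) * deriv φ (l*x) := by
    intro x
    have h : HasDerivAt (fun x => φ (l * x)) (deriv φ (l*x) * l) x :=
      (hd (l*x)).hasDerivAt.comp x
        (by simpa using (hasDerivAt_id x).const_mul l :
          HasDerivAt (fun y : ℝ => l * y) l x)
    rw [show scal1 l φ = fun x => l ^ ((1:ℝ)/2) * φ (l * x) from rfl,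
      (h.const_mul _).deriv]; ring
  unfold gradSq1
  simp_rw [hder, mul_pow]
  rw [integral_const_mul, Measure.integral_comp_mul_left (fun y => (deriv φ y)^2) l,
    smul_eq_mul, abs_inv, abs_of_pos hl, ← mul_assoc]
  congr 1
  rw [← Real.rpow_natCast (l ^ ((1:ℝ)/2)) 2, ← Real.rpow_mul hl.le]
  norm_num
  have hne := hl.ne'
  rw [← Real.rpow_natCast l 2]
  norm_num
  field_simp

lemma scal_lp (φ : ℝ → ℝ) (p : ℕ) {l : ℝ} (hl : 0 < l) :
    lp1 p (scal1 l φ) = l ^ ((p:ℝ)/2 - 1) * lp1 p φ := by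
  unfold lp1 scal1
  have h : ∀ x, |l ^ ((1:ℝ)/2) * φ (l * x)| ^ p
      = l ^ ((p:ℝ)/2) * |φ (l * x)| ^ p := by
    intro x
    rw [abs_mul, mul_pow, abs_of_nonneg (Real.rpow_nonneg hl.le _),
      ← Real.rpow_natCast (l ^ ((1:ℝ)/2)) p, ← Real.rpow_mul hl.le]
    ring_nf
  simp_rw [h]
  rw [integral_const_mul, Measure.integral_comp_mul_left (fun y => |φ y| ^ p) l,
    smul_eq_mul, abs_inv, abs_of_pos hl, ← mul_assoc]
  congr 1
  rw [← Real.rpow_neg_one l, ← Real.rpow_add hl]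
  ring_nf

theorem stmt12 (a₂ : ℝ) (ha₂ : a₂ < 0) (φ : ℝ → ℝ)
    (hφ : Adm1 φ) (hφ0 : φ ≠ 0)
    (hK : Kf1 a₂ φ = 0) (hP : Pf1 a₂ φ = 0) :
    deriv (deriv (fun l : ℝ => Sf1 a₂ (scal1 l φ))) 1
        = gradSq1 φ - (1/12) * lp1 3 φ - (3/20) * lp1 5 φ ∧
      gradSq1 φ - (1/12) * lp1 3 φ - (3/20) * lp1 5 φ
        = -(5/18) * gradSq1 φ - (1/54) * lp1 3 φ + (5*a₂/72) * lp1 4 φ ∧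
      -(5/18) * gradSq1 φ - (1/54) * lp1 3 φ + (5*a₂/72) * lp1 4 φ < 0 := by
  obtain ⟨hd, -, -, h3, h4, h5⟩ := hφ
  set G := gradSq1 φ with hG
  set A3 := lp1 3 φ with hA3
  set A4 := lp1 4 φ with hA4
  set A5 := lp1 5 φ with hA5
  -- the rescaled action for l > 0
  set g : ℝ → ℝ := fun l =>
    (1/2) * l ^ (2:ℝ) * G + (1/3) * l ^ ((1:ℝ)/2) * A3
      - (a₂/4) * l ^ (1:ℝ) * A4 - (1/5) * l ^ ((3:ℝ)/2) * A5 with hg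
  set g' : ℝ → ℝ := fun l =>
    (1/2) * (2 * l ^ (1:ℝ)) * G + (1/3) * ((1/2) * l ^ (-(1:ℝ)/2)) * A3
      - (a₂/4) * (1 * l ^ (0:ℝ)) * A4 - (1/5) * ((3/2) * l ^ ((1:ℝ)/2)) * A5 with hg'
  have hmem : Set.Ioi (0:ℝ) ∈ nhds (1:ℝ) := Ioi_mem_nhds one_pos
  have heq : (fun l : ℝ => Sf1 a₂ (scal1 l φ)) =ᶠ[nhds 1] g := by
    filter_upwards [hmem] with l hl
    have hl : (0:ℝ) < l := hl
    rw [Sf1, scal_gradSq φ hd hl, scal_lp φ 3 hl, scal_lp φ 4 hl, scal_lp φ 5 hl, hg]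
    norm_num
    ring_nf
    simp only [hG, hA3, hA4, hA5]
  have hgderiv : ∀ l : ℝ, 0 < l → HasDerivAt g (g' l) l := by
    intro l hl
    have hne : l ≠ 0 := hl.ne'
    have t2 : HasDerivAt (fun x : ℝ => x ^ (2:ℝ)) (2 * l ^ (1:ℝ)) l := by
      have := Real.hasDerivAt_rpow_const (p := (2:ℝ)) (Or.inl hne)
      norm_num at this ⊢; exact this
    have th : HasDerivAt (fun x : ℝ => x ^ ((1:ℝ)/2)) ((1/2) * l ^ (-(1:ℝ)/2)) l := by
      have := Real.hasDerivAt_rpow_const (p := ((1:ℝ)/2)) (Or.inl hne) (x := l)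
      convert this using 1; norm_num
    have t1 : HasDerivAt (fun x : ℝ => x ^ (1:ℝ)) (1 * l ^ (0:ℝ)) l := by
      have := Real.hasDerivAt_rpow_const (p := (1:ℝ)) (Or.inl hne) (x := l)
      convert this using 1; norm_num
    have t32 : HasDerivAt (fun x : ℝ => x ^ ((3:ℝ)/2)) ((3/2) * l ^ ((1:ℝ)/2)) l := by
      have := Real.hasDerivAt_rpow_const (p := ((3:ℝ)/2)) (Or.inl hne) (x := l)
      convert this using 2; norm_num
    have H := ((((t2.const_mul ((1:ℝ)/2)).mul_const G).add
        ((th.const_mul ((1:ℝ)/3)).mul_const A3)).sub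
        ((t1.const_mul (a₂/4)).mul_const A4)).sub
        ((t32.const_mul ((1:ℝ)/5)).mul_const A5)
    rw [hg, hg']
    exact H.congr_deriv (by ring)
  have hg'deriv : HasDerivAt g' (G - (1/12) * A3 - (3/20) * A5) 1 := by
    have th : HasDerivAt (fun x : ℝ => x ^ (-(1:ℝ)/2)) (-(1/2) * (1:ℝ) ^ (-(3:ℝ)/2)) 1 := by
      have := Real.hasDerivAt_rpow_const (p := (-(1:ℝ)/2)) (Or.inl one_ne_zero) (x := (1:ℝ))
      convert this using 2 <;> norm_num
    have t1 : HasDerivAt (fun x : ℝ => x ^ (1:ℝ)) ((1:ℝ) * (1:ℝ) ^ (0:ℝ)) 1 := by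
      have := Real.hasDerivAt_rpow_const (p := (1:ℝ)) (Or.inl one_ne_zero) (x := (1:ℝ))
      convert this using 2 <;> norm_num
    have t0 : HasDerivAt (fun x : ℝ => x ^ (0:ℝ)) ((0:ℝ) * (1:ℝ) ^ (-1:ℝ)) 1 := by
      have := Real.hasDerivAt_rpow_const (p := (0:ℝ)) (Or.inl one_ne_zero) (x := (1:ℝ))
      convert this using 2 <;> norm_num
    have th2 : HasDerivAt (fun x : ℝ => x ^ ((1:ℝ)/2)) ((1/2) * (1:ℝ) ^ (-(1:ℝ)/2)) 1 := by
      have := Real.hasDerivAt_rpow_const (p := ((1:ℝ)/2)) (Or.inl one_ne_zero) (x := (1:ℝ))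
      convert this using 2 <;> norm_num
    have H := (((((t1.const_mul (2:ℝ)).const_mul ((1:ℝ)/2)).mul_const G).add
        (((th.const_mul ((1:ℝ)/2)).const_mul ((1:ℝ)/3)).mul_const A3)).sub
        (((t0.const_mul (1:ℝ)).const_mul (a₂/4)).mul_const A4)).sub
        (((th2.const_mul ((3:ℝ)/2)).const_mul ((1:ℝ)/5)).mul_const A5)
    rw [hg']
    refine H.congr_deriv ?_
    simp only [Real.one_rpow]
    ring
  have hderiv_eq : deriv (fun l : ℝ => Sf1 a₂ (scal1 l φ)) =ᶠ[nhds 1] g' := by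
    have h1 : deriv (fun l : ℝ => Sf1 a₂ (scal1 l φ)) =ᶠ[nhds 1] deriv g := heq.deriv
    refine h1.trans ?_
    filter_upwards [hmem] with l hl
    exact (hgderiv l hl).deriv
  have hfirst : deriv (deriv (fun l : ℝ => Sf1 a₂ (scal1 l φ))) 1
      = G - (1/12) * A3 - (3/20) * A5 := by
    rw [hderiv_eq.deriv_eq]
    exact hg'deriv.deriv
  -- algebraic identity
  have hKe : G + A3 - a₂ * A4 - A5 = 0 := hK
  have hPe : G + (1/6) * A3 - (a₂/4) * A4 - (3/10) * A5 = 0 := hP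
  have hsecond : G - (1/12) * A3 - (3/20) * A5
      = -(5/18) * G - (1/54) * A3 + (5*a₂/72) * A4 := by linarith
  refine ⟨hfirst, hsecond, ?_⟩
  -- negativity
  have hGnn : 0 ≤ G := integral_nonneg fun x => sq_nonneg _
  have hA4nn : 0 ≤ A4 := integral_nonneg fun x => pow_nonneg (abs_nonneg _) _
  have hA3pos : 0 < A3 := by
    have hint : Integrable (fun x => |φ x| ^ (3:ℕ)) volume := by
      have := h3.integrable_norm_rpow (by norm_num) (by norm_num)
      simpa [Real.norm_eq_abs] using this
    rw [hA3, lp1]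
    refine (integral_pos_iff_support_of_nonneg
      (fun x => pow_nonneg (abs_nonneg _) _) hint).2 ?_
    have hcont : Continuous fun x => |φ x| ^ (3:ℕ) := (hd.continuous.abs.pow 3)
    obtain ⟨x₀, hx₀⟩ := Function.ne_iff.1 hφ0
    have hopen : IsOpen (Function.support fun x => |φ x| ^ (3:ℕ)) := by
      have : (Function.support fun x => |φ x| ^ (3:ℕ))
          = (fun x => |φ x| ^ (3:ℕ)) ⁻¹' {0}ᶜ := by
        ext x; simp [Function.mem_support]
      rw [this]
      exact (isOpen_compl_singleton).preimage hcont
    refine hopen.measure_pos volume ⟨x₀, ?_⟩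
    simp only [Function.mem_support]
    have : φ x₀ ≠ 0 := by simpa using hx₀
    exact pow_ne_zero _ (abs_ne_zero.2 this)
  have : (5*a₂/72) * A4 ≤ 0 :=
    mul_nonpos_of_nonpos_of_nonneg (by linarith) hA4nn
  linarith
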